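/- Let X be an M×M complex matrix and let J(X) be the 2M×2M matrix [[0, X],[X^T, 0]]. Then for every real α > 0, the generating polynomials satisfy F^{(α)}_{J(X)}(t) = (F^{(α)}_X(t))^2 as polynomials in t. -/

import Mathlib

open scoped BigOperators Matrix

/-- The square submatrix of `A` with rows indexed by `I` and columns indexed by `J`
(both in increasing order), as a determinant; it is `0` if `I.card ≠ J.card`. -/
noncomputable def subdetC {N : ℕ} (A : Matrix (Fin N) (Fin N) ℂ) (I J : Finset (Fin N)) : ℂ :=
  if h : J.card = I.card then
    Matrix.det (Matrix.of fun a b : Fin I.card =>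
      A (I.orderEmbOfFin rfl a) (J.orderEmbOfFin h b))
  else 0

/-- `S_r^{(α)}(A) = Σ_{|I|=|J|=r} |det A[I,J]|^α`. -/
noncomputable def SpowC {N : ℕ} (A : Matrix (Fin N) (Fin N) ℂ) (α : ℝ) (r : ℕ) : ℝ :=
  ∑ I ∈ Finset.univ.filter (fun I : Finset (Fin N) => I.card = r),
    ∑ J ∈ Finset.univ.filter (fun J : Finset (Fin N) => J.card = r),
      ‖subdetC A I J‖ ^ α

/-- The generating polynomial `F^{(α)}_A(t) = Σ_{r=0}^{N} S_r^{(α)}(A) t^r`. -/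
noncomputable def genPoly {N : ℕ} (A : Matrix (Fin N) (Fin N) ℂ) (α : ℝ) : Polynomial ℝ :=
  ∑ r ∈ Finset.range (N + 1), Polynomial.C (SpowC A α r) * Polynomial.X ^ r

/-- The `2M × 2M` chiral block matrix `J(X) = [[0, X],[Xᵀ, 0]]`. -/
def Jmat {M : ℕ} (X : Matrix (Fin M) (Fin M) ℂ) :
    Matrix (Fin (2 * M)) (Fin (2 * M)) ℂ :=
  Matrix.reindex (finSumFinEquiv.trans (finCongr (two_mul M).symm))
    (finSumFinEquiv.trans (finCongr (two_mul M).symm))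
    (Matrix.fromBlocks 0 X Xᵀ 0)

lemma SpowC_eq_zero {N : ℕ} (A : Matrix (Fin N) (Fin N) ℂ) (α : ℝ) {r : ℕ} (h : N < r) :
    SpowC A α r = 0 := by
  apply Finset.sum_eq_zero
  intro I hI
  simp only [Finset.mem_filter, Finset.mem_univ, true_and] at hI
  have := I.card_le_univ
  simp [Finset.card_univ] at this
  omega

lemma coeff_genPoly {N : ℕ} (A : Matrix (Fin N) (Fin N) ℂ) (α : ℝ) (n : ℕ) :
    (genPoly A α).coeff n = SpowC A α n := by
  unfold genPoly
  rw [Polynomial.finset_sum_coeff]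
  simp only [Polynomial.coeff_C_mul, Polynomial.coeff_X_pow, mul_ite, mul_one, mul_zero]
  rw [Finset.sum_ite_eq (Finset.range (N + 1)) n (fun r => SpowC A α r)]
  by_cases h : n ∈ Finset.range (N + 1)
  · simp [h]
  · simp only [h, if_false]
    rw [SpowC_eq_zero]
    simp at h; omega

def eM (M : ℕ) : (Fin M ⊕ Fin M) ≃ Fin (2 * M) :=
  finSumFinEquiv.trans (finCongr (two_mul M).symm)

def Phi {M : ℕ} (A B : Finset (Fin M)) : Finset (Fin (2 * M)) :=
  (A.disjSum B).map (eM M).toEmbedding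

lemma Phi_card {M : ℕ} (A B : Finset (Fin M)) : (Phi A B).card = A.card + B.card := by
  simp [Phi]

lemma Jmat_apply {M : ℕ} (X : Matrix (Fin M) (Fin M) ℂ) (s t : Fin M ⊕ Fin M) :
    Jmat X (eM M s) (eM M t) = Matrix.fromBlocks 0 X Xᵀ 0 s t := by
  simp [Jmat, eM, Matrix.reindex_apply]

lemma absDet_submatrix_equiv {m n : Type*} [Fintype m] [DecidableEq m] [Fintype n]
    [DecidableEq n] (A : Matrix n n ℂ) (e f : m ≃ n) :
    ‖(A.submatrix e f).det‖ = ‖A.det‖ := by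
  have h1 : A.submatrix e f = (A.submatrix e e).submatrix id (f.trans e.symm) := by
    ext i j; simp
  rw [h1, Matrix.det_permute', Matrix.det_submatrix_equiv_self, norm_mul]
  rcases Int.units_eq_one_or (Equiv.Perm.sign (f.trans e.symm)) with h | h <;> simp [h]

lemma absDet_submatrix_perm {r : ℕ} (A : Matrix (Fin r) (Fin r) ℂ) (σ τ : Equiv.Perm (Fin r)) :
    ‖(A.submatrix σ τ).det‖ = ‖A.det‖ := by
  have h1 : A.submatrix σ τ = (A.submatrix id τ).submatrix σ id := rfl
  rw [h1, Matrix.det_permute, Matrix.det_permute', norm_mul, norm_mul]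
  rcases Int.units_eq_one_or (Equiv.Perm.sign σ) with h | h <;>
    rcases Int.units_eq_one_or (Equiv.Perm.sign τ) with h' | h' <;>
    simp [h, h']

lemma abs_subdetC_eq {N r : ℕ} (A : Matrix (Fin N) (Fin N) ℂ) {I J : Finset (Fin N)}
    (hI : I.card = r) (hJ : J.card = r) (f g : Fin r → Fin N)
    (hfI : ∀ i, f i ∈ I) (hgJ : ∀ i, g i ∈ J)
    (hf : Function.Injective f) (hg : Function.Injective g) :
    ‖subdetC A I J‖ =
      ‖(Matrix.of fun a b : Fin r => A (f a) (g b)).det‖ := by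
  subst hI
  have hJI : J.card = I.card := hJ
  rw [subdetC, dif_pos hJI]
  set embI := I.orderEmbOfFin rfl with hembI
  set embJ := J.orderEmbOfFin hJI with hembJ
  -- build permutations
  have cardI : Fintype.card (Fin I.card) = Fintype.card {x // x ∈ I} := by
    simp [Fintype.card_coe]
  have cardJ : Fintype.card (Fin I.card) = Fintype.card {x // x ∈ J} := by
    simp [Fintype.card_coe, hJI]
  have bij : ∀ (S : Finset (Fin N)) (h : Fintype.card (Fin I.card) = Fintype.card {x // x ∈ S})
      (u : Fin I.card → Fin N) (hu : ∀ i, u i ∈ S) (hui : Function.Injective u),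
      Function.Bijective (fun i => (⟨u i, hu i⟩ : {x // x ∈ S})) := by
    intro S h u hu hui
    rw [Fintype.bijective_iff_injective_and_card]
    exact ⟨fun a b hab => hui (congrArg Subtype.val hab), h.symm ▸ rfl⟩
  have hfb := bij I cardI f hfI hf
  have hgb := bij J cardJ g hgJ hg
  have heb := bij I cardI embI (fun i => Finset.orderEmbOfFin_mem I rfl i)
    (I.orderEmbOfFin rfl).injective
  have hjb := bij J cardJ embJ (fun i => Finset.orderEmbOfFin_mem J hJI i)
    (J.orderEmbOfFin hJI).injective
  set σ : Equiv.Perm (Fin I.card) :=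
    (Equiv.ofBijective _ hfb).trans (Equiv.ofBijective _ heb).symm with hσ
  set τ : Equiv.Perm (Fin I.card) :=
    (Equiv.ofBijective _ hgb).trans (Equiv.ofBijective _ hjb).symm with hτ
  have hfσ : ∀ i, embI (σ i) = f i := by
    intro i
    have : (Equiv.ofBijective _ heb) (σ i) = (⟨f i, hfI i⟩ : {x // x ∈ I}) :=
      (Equiv.ofBijective _ heb).apply_symm_apply _
    exact congrArg Subtype.val this
  have hgτ : ∀ i, embJ (τ i) = g i := by
    intro i
    have : (Equiv.ofBijective _ hjb) (τ i) = (⟨g i, hgJ i⟩ : {x // x ∈ J}) :=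
      (Equiv.ofBijective _ hjb).apply_symm_apply _
    exact congrArg Subtype.val this
  have key : (Matrix.of fun a b : Fin I.card => A (f a) (g b)) =
      (Matrix.of fun a b : Fin I.card => A (embI a) (embJ b)).submatrix σ τ := by
    ext a b
    simp [Matrix.submatrix_apply, hfσ, hgτ]
  rw [key, absDet_submatrix_perm]

lemma det_eq_zero_of_zero_block {r : ℕ} (A : Matrix (Fin r) (Fin r) ℂ)
    (S T : Finset (Fin r)) (hz : ∀ i j, i ∈ S → j ∉ T → A i j = 0)
    (h : T.card < S.card) : A.det = 0 := by
  rw [Matrix.det_apply']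
  apply Finset.sum_eq_zero
  intro σ _
  have : ∃ i, σ i ∈ S ∧ i ∉ T := by
    by_contra hc
    push_neg at hc
    have hle : S.card ≤ T.card := by
      apply Finset.card_le_card_of_injOn (fun s => σ.symm s)
      · intro s hs
        have := hc (σ.symm s)
        simp only [Equiv.apply_symm_apply] at this
        exact this hs
      · intro a _ b _ hab
        exact σ.symm.injective hab
    omega
  obtain ⟨i, hiS, hiT⟩ := this
  have : (∏ j : Fin r, A (σ j) j) = 0 :=
    Finset.prod_eq_zero (Finset.mem_univ i) (hz _ _ hiS hiT)
  rw [this, mul_zero]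

lemma abs_subdetC_Jmat {M : ℕ} (X : Matrix (Fin M) (Fin M) ℂ)
    (I₁ I₂ J₁ J₂ : Finset (Fin M)) {r : ℕ}
    (hI : I₁.card + I₂.card = r) (hJ : J₁.card + J₂.card = r) :
    ‖subdetC (Jmat X) (Phi I₁ I₂) (Phi J₁ J₂)‖ =
      if I₁.card = J₂.card then
        ‖subdetC X I₁ J₂‖ * ‖subdetC X J₁ I₂‖ else 0 := by
  set embI₁ := I₁.orderEmbOfFin rfl
  set embI₂ := I₂.orderEmbOfFin rfl
  set embJ₁ := J₁.orderEmbOfFin rfl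
  set embJ₂ := J₂.orderEmbOfFin rfl
  set rowIdx : Fin r ≃ (Fin I₁.card ⊕ Fin I₂.card) :=
    (finCongr hI.symm).trans finSumFinEquiv.symm with hrowIdx
  set colIdx : Fin r ≃ (Fin J₁.card ⊕ Fin J₂.card) :=
    (finCongr hJ.symm).trans finSumFinEquiv.symm with hcolIdx
  set f : Fin r → Fin (2 * M) :=
    fun i => eM M (Sum.map embI₁ embI₂ (rowIdx i)) with hfdef
  set g : Fin r → Fin (2 * M) :=
    fun j => eM M (Sum.map embJ₁ embJ₂ (colIdx j)) with hgdef
  have hf : Function.Injective f :=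
    (eM M).injective.comp ((embI₁.injective.sumMap embI₂.injective).comp rowIdx.injective)
  have hg : Function.Injective g :=
    (eM M).injective.comp ((embJ₁.injective.sumMap embJ₂.injective).comp colIdx.injective)
  have hfmem : ∀ i, f i ∈ Phi I₁ I₂ := by
    intro i
    rw [Phi, Finset.mem_map_equiv, hfdef]
    simp only [Equiv.symm_apply_apply]
    rcases rowIdx i with x | x
    · simp only [Sum.map_inl, Finset.inl_mem_disjSum]
      exact Finset.orderEmbOfFin_mem I₁ rfl x
    · simp only [Sum.map_inr, Finset.inr_mem_disjSum]
      exact Finset.orderEmbOfFin_mem I₂ rfl x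
  have hgmem : ∀ j, g j ∈ Phi J₁ J₂ := by
    intro j
    rw [Phi, Finset.mem_map_equiv, hgdef]
    simp only [Equiv.symm_apply_apply]
    rcases colIdx j with x | x
    · simp only [Sum.map_inl, Finset.inl_mem_disjSum]
      exact Finset.orderEmbOfFin_mem J₁ rfl x
    · simp only [Sum.map_inr, Finset.inr_mem_disjSum]
      exact Finset.orderEmbOfFin_mem J₂ rfl x
  have main := abs_subdetC_eq (Jmat X) (I := Phi I₁ I₂) (J := Phi J₁ J₂)
    (by rw [Phi_card]; exact hI) (by rw [Phi_card]; exact hJ) f g hfmem hgmem hf hg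
  rw [main]
  have entry : ∀ i j, (Matrix.of fun i j : Fin r => Jmat X (f i) (g j)) i j =
      Matrix.fromBlocks 0 X Xᵀ 0 (Sum.map embI₁ embI₂ (rowIdx i))
        (Sum.map embJ₁ embJ₂ (colIdx j)) := by
    intro i j
    simp only [Matrix.of_apply, hfdef, hgdef, Jmat_apply]
  by_cases hcase : I₁.card = J₂.card
  · -- matching case
    have hb : I₂.card = J₁.card := by omega
    set B : Matrix (Fin I₁.card) (Fin I₁.card) ℂ :=
      Matrix.of fun x y => X (embI₁ x) (embJ₂ (finCongr hcase y)) with hB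
    set Cm : Matrix (Fin I₂.card) (Fin I₂.card) ℂ :=
      Matrix.of fun x y => X (embJ₁ (finCongr hb y)) (embI₂ x) with hCm
    set colIdx' : Fin r ≃ (Fin I₁.card ⊕ Fin I₂.card) :=
      colIdx.trans ((Equiv.sumComm _ _).trans
        (Equiv.sumCongr (finCongr hcase.symm) (finCongr hb.symm))) with hcolIdx'
    have key : (Matrix.of fun i j : Fin r => Jmat X (f i) (g j)) =
        (Matrix.fromBlocks B 0 0 Cm).submatrix rowIdx colIdx' := by
      ext i j
      rw [entry i j, Matrix.submatrix_apply, hcolIdx']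
      rcases h1 : rowIdx i with x | x <;> rcases h2 : colIdx j with y | y <;>
        simp [h1, h2, hB, hCm, Matrix.fromBlocks]
    rw [key, absDet_submatrix_equiv, Matrix.det_fromBlocks_zero₂₁, if_pos hcase, norm_mul]
    congr 1
    · rw [abs_subdetC_eq X (I := I₁) (J := J₂) rfl hcase.symm embI₁
        (fun y => embJ₂ (finCongr hcase y)) (fun i => Finset.orderEmbOfFin_mem I₁ rfl i)
        (fun i => Finset.orderEmbOfFin_mem J₂ rfl _) embI₁.injective
        (embJ₂.injective.comp (finCongr hcase).injective)]
    · rw [abs_subdetC_eq X (I := J₁) (J := I₂) hb.symm rfl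
        (fun y => embJ₁ (finCongr hb y)) embI₂
        (fun i => Finset.orderEmbOfFin_mem J₁ rfl _)
        (fun i => Finset.orderEmbOfFin_mem I₂ rfl _)
        (embJ₁.injective.comp (finCongr hb).injective) embI₂.injective]
      rw [← Matrix.det_transpose]
      congr 1
  · -- mismatched case: determinant vanishes
    rw [if_neg hcase]
    have hdet : (Matrix.of fun i j : Fin r => Jmat X (f i) (g j)).det = 0 := by
      rcases lt_or_gt_of_ne (fun h => hcase h) with hlt | hgt
      · -- I₁.card < J₂.card, hence J₁.card < I₂.card : use inr rows, inl cols
        have hb : J₁.card < I₂.card := by omega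
        apply det_eq_zero_of_zero_block _
          (Finset.univ.map ⟨fun x : Fin I₂.card => rowIdx.symm (Sum.inr x),
            fun u v huv => Sum.inr_injective (rowIdx.symm.injective huv)⟩)
          (Finset.univ.map ⟨fun y : Fin J₁.card => colIdx.symm (Sum.inl y),
            fun u v huv => Sum.inl_injective (colIdx.symm.injective huv)⟩)
        · intro i j hiS hjT
          simp only [Finset.mem_map, Finset.mem_univ, true_and,
            Function.Embedding.coeFn_mk] at hiS hjT
          obtain ⟨x, hx⟩ := hiS
          have hrow : rowIdx i = Sum.inr x := by rw [← hx]; exact rowIdx.apply_symm_apply _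
          have hcol : ∃ y, colIdx j = Sum.inr y := by
            rcases h2 : colIdx j with y | y
            · exact absurd ⟨y, by show colIdx.symm _ = j; rw [← h2]; simp⟩ hjT
            · exact ⟨y, rfl⟩
          obtain ⟨y, hy⟩ := hcol
          rw [entry i j, hrow, hy]
          simp [Matrix.fromBlocks]
        · simpa using hb
      · -- J₂.card < I₁.card : use inl rows, inr cols
        apply det_eq_zero_of_zero_block _
          (Finset.univ.map ⟨fun x : Fin I₁.card => rowIdx.symm (Sum.inl x),
            fun u v huv => Sum.inl_injective (rowIdx.symm.injective huv)⟩)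
          (Finset.univ.map ⟨fun y : Fin J₂.card => colIdx.symm (Sum.inr y),
            fun u v huv => Sum.inr_injective (colIdx.symm.injective huv)⟩)
        · intro i j hiS hjT
          simp only [Finset.mem_map, Finset.mem_univ, true_and,
            Function.Embedding.coeFn_mk] at hiS hjT
          obtain ⟨x, hx⟩ := hiS
          have hrow : rowIdx i = Sum.inl x := by rw [← hx]; exact rowIdx.apply_symm_apply _
          have hcol : ∃ y, colIdx j = Sum.inl y := by
            rcases h2 : colIdx j with y | y
            · exact ⟨y, rfl⟩
            · exact absurd ⟨y, by show colIdx.symm _ = j; rw [← h2]; simp⟩ hjT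
          obtain ⟨y, hy⟩ := hcol
          rw [entry i j, hrow, hy]
          simp [Matrix.fromBlocks]
        · simpa using hgt
    rw [hdet, norm_zero]

lemma SpowC_as_sum {N : ℕ} (A : Matrix (Fin N) (Fin N) ℂ) (α : ℝ) (a : ℕ) :
    SpowC A α a = ∑ q : Finset (Fin N) × Finset (Fin N),
      if q.1.card = a ∧ q.2.card = a then ‖subdetC A q.1 q.2‖ ^ α else 0 := by
  rw [SpowC, Fintype.sum_prod_type, Finset.sum_filter]
  refine Finset.sum_congr rfl fun I _ => ?_
  split_ifs with h
  · rw [Finset.sum_filter]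
    exact Finset.sum_congr rfl fun J _ => by simp [h]
  · symm; apply Finset.sum_eq_zero; intro J _; simp [h]

lemma Phi_bijective (M : ℕ) :
    Function.Bijective (fun p : Finset (Fin M) × Finset (Fin M) => Phi p.1 p.2) := by
  rw [Fintype.bijective_iff_injective_and_card]
  constructor
  · intro p q h
    simp only [Phi] at h
    have h2 := Finset.map_injective (eM M).toEmbedding h
    have h3 := congrArg Finset.toLeft h2
    have h4 := congrArg Finset.toRight h2
    simp only [Finset.toLeft_disjSum, Finset.toRight_disjSum] at h3 h4
    exact Prod.ext h3 h4
  · simp only [Fintype.card_prod, Fintype.card_finset, Fintype.card_fin]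
    rw [← pow_add, two_mul]

lemma Spow_Jmat {M : ℕ} (X : Matrix (Fin M) (Fin M) ℂ) {α : ℝ} (hα : 0 < α) (n : ℕ) :
    SpowC (Jmat X) α n =
      ∑ p ∈ Finset.HasAntidiagonal.antidiagonal n, SpowC X α p.1 * SpowC X α p.2 := by
  classical
  set u : Finset (Fin M) → Finset (Fin M) → ℝ :=
    fun I J => ‖subdetC X I J‖ ^ α with hu
  set G : (Finset (Fin M) × Finset (Fin M)) × (Finset (Fin M) × Finset (Fin M)) → ℝ :=
    fun z => if (z.1.1.card + z.1.2.card = n ∧ z.2.1.card + z.2.2.card = n) ∧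
        z.1.1.card = z.2.2.card then u z.1.1 z.2.2 * u z.2.1 z.1.2 else 0 with hG
  -- LHS
  have hL : SpowC (Jmat X) α n = ∑ z, G z := by
    rw [SpowC_as_sum]
    rw [← Fintype.sum_bijective _ ((Phi_bijective M).prodMap (Phi_bijective M))
      (fun z : (Finset (Fin M) × Finset (Fin M)) × (Finset (Fin M) × Finset (Fin M)) =>
        if (Phi z.1.1 z.1.2).card = n ∧ (Phi z.2.1 z.2.2).card = n then
          ‖subdetC (Jmat X) (Phi z.1.1 z.1.2) (Phi z.2.1 z.2.2)‖ ^ α else 0)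
      _ (fun z => rfl)]
    refine Finset.sum_congr rfl fun z _ => ?_
    simp only [hG]
    rw [Phi_card, Phi_card]
    by_cases h1 : z.1.1.card + z.1.2.card = n ∧ z.2.1.card + z.2.2.card = n
    · rw [if_pos h1, abs_subdetC_Jmat X _ _ _ _ h1.1 h1.2]
      by_cases h2 : z.1.1.card = z.2.2.card
      · rw [if_pos h2, if_pos ⟨h1, h2⟩,
          Real.mul_rpow (norm_nonneg _) (norm_nonneg _)]
      · rw [if_neg h2, if_neg (by tauto), Real.zero_rpow hα.ne']
    · rw [if_neg h1, if_neg (by tauto)]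
  -- RHS
  have hR : (∑ p ∈ Finset.HasAntidiagonal.antidiagonal n, SpowC X α p.1 * SpowC X α p.2) = ∑ z, G z := by
    have step1 : (∑ p ∈ Finset.HasAntidiagonal.antidiagonal n, SpowC X α p.1 * SpowC X α p.2) =
        ∑ z : (Finset (Fin M) × Finset (Fin M)) × (Finset (Fin M) × Finset (Fin M)),
          ∑ p ∈ Finset.HasAntidiagonal.antidiagonal n,
            (if z.1.1.card = p.1 ∧ z.1.2.card = p.1 then u z.1.1 z.1.2 else 0) *
            (if z.2.1.card = p.2 ∧ z.2.2.card = p.2 then u z.2.1 z.2.2 else 0) := by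
      rw [Finset.sum_comm]
      refine Finset.sum_congr rfl fun p _ => ?_
      rw [SpowC_as_sum, SpowC_as_sum, Finset.sum_mul_sum]
      conv_rhs => rw [Fintype.sum_prod_type]
    rw [step1]
    have collapse : ∀ z : (Finset (Fin M) × Finset (Fin M)) × (Finset (Fin M) × Finset (Fin M)),
        (∑ p ∈ Finset.HasAntidiagonal.antidiagonal n,
          (if z.1.1.card = p.1 ∧ z.1.2.card = p.1 then u z.1.1 z.1.2 else 0) *
          (if z.2.1.card = p.2 ∧ z.2.2.card = p.2 then u z.2.1 z.2.2 else 0)) =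
        if (z.1.1.card + z.2.2.card = n ∧ z.2.1.card + z.1.2.card = n) ∧
            z.1.1.card = z.1.2.card then u z.1.1 z.1.2 * u z.2.1 z.2.2 else 0 := by
      intro z
      by_cases hC : (z.1.1.card + z.2.2.card = n ∧ z.2.1.card + z.1.2.card = n) ∧
          z.1.1.card = z.1.2.card
      · rw [if_pos hC]
        rw [Finset.sum_eq_single (z.1.1.card, z.2.2.card)]
        · rw [if_pos ⟨rfl, hC.2.symm⟩, if_pos ⟨by omega, rfl⟩]
        · intro p hp hne
          simp only [Finset.HasAntidiagonal.mem_antidiagonal] at hp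
          by_cases h1 : z.1.1.card = p.1 ∧ z.1.2.card = p.1
          · by_cases h2 : z.2.1.card = p.2 ∧ z.2.2.card = p.2
            · exact absurd (Prod.ext (by omega) (by omega) : p = (z.1.1.card, z.2.2.card))
                (by exact hne)
            · rw [if_neg h2, mul_zero]
          · rw [if_neg h1, zero_mul]
        · intro hmem
          exact absurd (Finset.HasAntidiagonal.mem_antidiagonal.mpr (by omega)) hmem
      · rw [if_neg hC]
        apply Finset.sum_eq_zero
        intro p hp
        simp only [Finset.HasAntidiagonal.mem_antidiagonal] at hp
        by_cases h1 : z.1.1.card = p.1 ∧ z.1.2.card = p.1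
        · by_cases h2 : z.2.1.card = p.2 ∧ z.2.2.card = p.2
          · exact absurd ⟨⟨by omega, by omega⟩, by omega⟩ hC
          · rw [if_neg h2, mul_zero]
        · rw [if_neg h1, zero_mul]
    simp only [collapse]
    -- reindex by the involutive shuffle
    set e : (Finset (Fin M) × Finset (Fin M)) × (Finset (Fin M) × Finset (Fin M)) →
        (Finset (Fin M) × Finset (Fin M)) × (Finset (Fin M) × Finset (Fin M)) :=
      fun z => ((z.1.1, z.2.2), (z.2.1, z.1.2)) with he
    have hinv : Function.Involutive e := fun z => rfl
    exact (Fintype.sum_bijective e hinv.bijective G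
      (fun z => if (z.1.1.card + z.2.2.card = n ∧ z.2.1.card + z.1.2.card = n) ∧
          z.1.1.card = z.1.2.card then u z.1.1 z.1.2 * u z.2.1 z.2.2 else 0)
      (fun z => rfl)).symm
  rw [hL, hR]

/-- **Squaring of the minor generating polynomial under the chiral block map.**
For every real `α > 0`, `F^{(α)}_{J(X)}(t) = (F^{(α)}_X(t))²`. -/
theorem genPoly_Jmat (M : ℕ) (X : Matrix (Fin M) (Fin M) ℂ) :
    ∀ α : ℝ, 0 < α → genPoly (Jmat X) α = (genPoly X α) ^ 2 := by
  intro α hα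
  apply Polynomial.ext
  intro n
  rw [sq, Polynomial.coeff_mul, coeff_genPoly, Spow_Jmat X hα n]
  exact Finset.sum_congr rfl fun p _ => by rw [coeff_genPoly, coeff_genPoly]
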